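/- In the sequential Setchain state machine, if e ∈ theset in some state and from every state an EpochInc transition stamping all currently-unstamped elements of theset is eventually taken, then eventually e ∈ ⋃_{k ≤ epoch} history(k) and remains there forever. -/
import Mathlib


structure SCState (E : Type*) where
  theset : Set E
  history : ℕ → Set E
  epoch : ℕ

def SCInit (E : Type*) : SCState E := ⟨∅, fun _ => ∅, 0⟩

inductive SCStep (E : Type*) : SCState E → SCState E → Prop
  | add (s : SCState E) (e : E) :
      SCStep E s ⟨s.theset ∪ {e}, s.history, s.epoch⟩
  | epochInc (s : SCState E) (E' : Set E)
      (hE' : E' ⊆ s.theset \ ⋃ k ≤ s.epoch, s.history k) :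
      SCStep E s
        ⟨s.theset, Function.update s.history (s.epoch + 1) E', s.epoch + 1⟩

/-- The "full" epoch-increment step stamping all unstamped elements. -/
def FullEpochInc {E : Type*} (s s' : SCState E) : Prop :=
  s' = ⟨s.theset,
        Function.update s.history (s.epoch + 1)
          (s.theset \ ⋃ k ≤ s.epoch, s.history k),
        s.epoch + 1⟩

lemma theset_mono {E : Type*} {s s' : SCState E} (h : SCStep E s s') :
    s.theset ⊆ s'.theset := by
  cases h with
  | add e => exact Set.subset_union_left
  | epochInc E' hE' => exact subset_rfl

lemma stamped_mono {E : Type*} {s s' : SCState E} (h : SCStep E s s') :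
    (⋃ k ≤ s.epoch, s.history k) ⊆ ⋃ k ≤ s'.epoch, s'.history k := by
  cases h with
  | add e => exact subset_rfl
  | epochInc E' hE' =>
    intro x hx
    simp only [Set.mem_iUnion] at hx ⊢
    obtain ⟨k, hk, hxk⟩ := hx
    exact ⟨k, hk.trans (Nat.le_succ _), by
      rw [Function.update_of_ne (by omega)]; exact hxk⟩

theorem eventual_get {E : Type*} (ρ : ℕ → SCState E)
    (hinit : ρ 0 = SCInit E)
    (hstep : ∀ n, SCStep E (ρ n) (ρ (n + 1)))
    (hfair : ∀ N, ∃ n ≥ N, FullEpochInc (ρ n) (ρ (n + 1)))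
    (e : E) (m : ℕ) (he : e ∈ (ρ m).theset) :
    ∃ N, ∀ n ≥ N, e ∈ ⋃ k ≤ (ρ n).epoch, (ρ n).history k := by
  have hts : ∀ {a b : ℕ}, a ≤ b → (ρ a).theset ⊆ (ρ b).theset := by
    intro a b hab
    induction b, hab using Nat.le_induction with
    | base => exact subset_rfl
    | succ b hab ih => exact ih.trans (theset_mono (hstep b))
  have hst : ∀ {a b : ℕ}, a ≤ b →
      (⋃ k ≤ (ρ a).epoch, (ρ a).history k) ⊆ ⋃ k ≤ (ρ b).epoch, (ρ b).history k := by
    intro a b hab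
    induction b, hab using Nat.le_induction with
    | base => exact subset_rfl
    | succ b hab ih => exact ih.trans (stamped_mono (hstep b))
  obtain ⟨n, hn, hfull⟩ := hfair m
  refine ⟨n + 1, fun p hp => ?_⟩
  have hen : e ∈ (ρ n).theset := hts hn he
  have hkey : e ∈ ⋃ k ≤ (ρ (n + 1)).epoch, (ρ (n + 1)).history k := by
    rw [hfull]
    simp only [Set.mem_iUnion]
    by_cases h : e ∈ ⋃ k ≤ (ρ n).epoch, (ρ n).history k
    · simp only [Set.mem_iUnion] at h
      obtain ⟨k, hk, hek⟩ := h
      exact ⟨k, hk.trans (Nat.le_succ _), by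
        rw [Function.update_of_ne (by omega)]; exact hek⟩
    · exact ⟨(ρ n).epoch + 1, le_rfl, by
        rw [Function.update_self]; exact ⟨hen, h⟩⟩
  exact hst hp hkey
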